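/- Let p > 1 and d ≥ 1 be fixed. Let G be the disjoint union of a complete bipartite graph K_{D,d} (with parts of sizes D and d) and D disjoint cliques each of size d+2, with vertex sets V_1 (the bipartite part) and V_2 (the cliques). Then f_p(V_2) = (d+1)^p and f_p(V_1) = (D·d^p + d·D^p)/(d + D), and as D → ∞, f_p(V_2)/f_p(V_1) → 0. -/
import Mathlib

open Filter

/-- Induced degree: `d_v(S)` is the number of neighbors of `v` lying in `S`
if `v ∈ S`, and `0` otherwise. -/
noncomputable def indDeg {V : Type*} [DecidableEq V] (G : SimpleGraph V)
    (S : Finset V) (v : V) : ℕ :=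
  if v ∈ S then Nat.card {u : V // u ∈ S ∧ G.Adj v u} else 0

/-- `f_p(S) = (1/|S|) Σ_{v∈S} d_v(S)^p`. -/
noncomputable def fp {V : Type*} [DecidableEq V] (G : SimpleGraph V)
    (p : ℝ) (S : Finset V) : ℝ :=
  (1 / (S.card : ℝ)) * ∑ v ∈ S, (indDeg G S v : ℝ) ^ p

/-- Disjoint union of the complete bipartite graph `K_{D,d}` and
`D` disjoint cliques, each of size `d+2`. -/
def bipCliqueGraph (D d : ℕ) :
    SimpleGraph ((Fin D ⊕ Fin d) ⊕ (Fin D × Fin (d + 2))) :=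
  completeBipartiteGraph (Fin D) (Fin d) ⊕g
    SimpleGraph.fromRel (fun a b : Fin D × Fin (d + 2) => a.1 = b.1)

/-- The vertex set of the `K_{D,d}` part. -/
def V1 (D d : ℕ) : Finset ((Fin D ⊕ Fin d) ⊕ (Fin D × Fin (d + 2))) :=
  Finset.univ.filter (fun x => x.isLeft)

/-- The vertex set of the union of cliques. -/
def V2 (D d : ℕ) : Finset ((Fin D ⊕ Fin d) ⊕ (Fin D × Fin (d + 2))) :=
  Finset.univ.filter (fun x => x.isRight)

lemma indDeg_eq_card {V : Type*} [Fintype V] [DecidableEq V] (G : SimpleGraph V)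
    [DecidableRel G.Adj]
    (S : Finset V) (v : V) (hv : v ∈ S) :
    indDeg G S v = (S.filter (fun u => G.Adj v u)).card := by
  classical
  rw [indDeg, if_pos hv, Nat.card_eq_fintype_card, Fintype.card_subtype]
  apply Finset.card_bij (fun u _ => u) <;> simp +contextual [and_comm]

instance (D d : ℕ) : DecidableRel (bipCliqueGraph D d).Adj := by
  unfold bipCliqueGraph SimpleGraph.sum
  intro u v
  rcases u with u | u <;> rcases v with v | v <;> simp <;> infer_instance

lemma V1_eq (D d : ℕ) : V1 D d = Finset.univ.image Sum.inl := by
  ext u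
  rcases u with u | u <;> simp [V1]

lemma V2_eq (D d : ℕ) : V2 D d = Finset.univ.image Sum.inr := by
  ext u
  rcases u with u | u <;> simp [V2]

lemma V1_card (D d : ℕ) : (V1 D d).card = D + d := by
  rw [V1_eq, Finset.card_image_of_injective _ Sum.inl_injective]
  simp

lemma V2_card (D d : ℕ) : (V2 D d).card = D * (d + 2) := by
  rw [V2_eq, Finset.card_image_of_injective _ Sum.inr_injective]
  simp

lemma indDeg_V1_left (D d : ℕ) (i : Fin D) :
    indDeg (bipCliqueGraph D d) (V1 D d) (Sum.inl (Sum.inl i)) = d := by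
  classical
  rw [indDeg_eq_card _ _ _ (by simp [V1])]
  have : (V1 D d).filter (fun u => (bipCliqueGraph D d).Adj (Sum.inl (Sum.inl i)) u)
      = Finset.univ.image (fun k : Fin d => (Sum.inl (Sum.inr k) :
          (Fin D ⊕ Fin d) ⊕ (Fin D × Fin (d + 2)))) := by
    ext u
    rcases u with (a | b) | c <;>
      simp [V1, bipCliqueGraph, SimpleGraph.sum_adj]
  rw [this, Finset.card_image_of_injective]
  · simp
  · intro a b h
    simpa using h

lemma indDeg_V1_right (D d : ℕ) (j : Fin d) :
    indDeg (bipCliqueGraph D d) (V1 D d) (Sum.inl (Sum.inr j)) = D := by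
  classical
  rw [indDeg_eq_card _ _ _ (by simp [V1])]
  have : (V1 D d).filter (fun u => (bipCliqueGraph D d).Adj (Sum.inl (Sum.inr j)) u)
      = Finset.univ.image (fun k : Fin D => (Sum.inl (Sum.inl k) :
          (Fin D ⊕ Fin d) ⊕ (Fin D × Fin (d + 2)))) := by
    ext u
    rcases u with (a | b) | c <;>
      simp [V1, bipCliqueGraph, SimpleGraph.sum_adj]
  rw [this, Finset.card_image_of_injective]
  · simp
  · intro a b h
    simpa using h

lemma indDeg_V2 (D d : ℕ) (x : Fin D × Fin (d + 2)) :
    indDeg (bipCliqueGraph D d) (V2 D d) (Sum.inr x) = d + 1 := by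
  classical
  rw [indDeg_eq_card _ _ _ (by simp [V2])]
  obtain ⟨i, j⟩ := x
  have : (V2 D d).filter (fun u => (bipCliqueGraph D d).Adj (Sum.inr (i, j)) u)
      = (Finset.univ.erase j).image (fun k : Fin (d + 2) => (Sum.inr (i, k) :
          (Fin D ⊕ Fin d) ⊕ (Fin D × Fin (d + 2)))) := by
    ext u
    rcases u with a | ⟨i', k⟩
    · simp [V2, bipCliqueGraph]
    · simp only [V2, bipCliqueGraph, SimpleGraph.sum_adj, SimpleGraph.fromRel_adj,
        Finset.mem_filter, Finset.mem_univ, Finset.mem_image, Finset.mem_erase,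
        Sum.isRight_inr, true_and, and_true, Prod.mk.injEq, ne_eq]
      simp only [Sum.inr.injEq, Prod.mk.injEq]
      constructor
      · rintro ⟨hne, h⟩
        have hi : i = i' := by tauto
        exact ⟨k, fun hk => hne ⟨hi, hk.symm⟩, hi, rfl⟩
      · rintro ⟨a, haj, hi, rfl⟩
        exact ⟨fun h => haj h.2.symm, Or.inl hi⟩
  rw [this, Finset.card_image_of_injective]
  · simp
  · intro a b h
    simpa using h

theorem simplePeel_construction_densities (p : ℝ) (hp : 1 < p)
    (d : ℕ) (hd : 1 ≤ d) :
    (∀ D : ℕ, 0 < D →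
      fp (bipCliqueGraph D d) p (V2 D d) = ((d : ℝ) + 1) ^ p ∧
      fp (bipCliqueGraph D d) p (V1 D d) =
        ((D : ℝ) * (d : ℝ) ^ p + (d : ℝ) * (D : ℝ) ^ p) / ((d : ℝ) + D)) ∧
    Tendsto (fun D : ℕ =>
        fp (bipCliqueGraph D d) p (V2 D d) / fp (bipCliqueGraph D d) p (V1 D d))
      atTop (nhds 0) := by
  have hdpos : (0 : ℝ) < d := by exact_mod_cast hd
  have main : ∀ D : ℕ, 0 < D →
      fp (bipCliqueGraph D d) p (V2 D d) = ((d : ℝ) + 1) ^ p ∧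
      fp (bipCliqueGraph D d) p (V1 D d) =
        ((D : ℝ) * (d : ℝ) ^ p + (d : ℝ) * (D : ℝ) ^ p) / ((d : ℝ) + D) := by
    intro D hD
    have hDpos : (0 : ℝ) < D := by exact_mod_cast hD
    constructor
    · have hsum : ∑ v ∈ V2 D d, ((indDeg (bipCliqueGraph D d) (V2 D d) v : ℝ)) ^ p
          = (V2 D d).card * ((d : ℝ) + 1) ^ p := by
        rw [Finset.sum_congr rfl (fun v hv => ?_), Finset.sum_const, nsmul_eq_mul]
        rw [V2_eq] at hv
        obtain ⟨x, -, rfl⟩ := Finset.mem_image.mp hv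
        rw [indDeg_V2]
        push_cast
        ring_nf
      rw [fp, hsum]
      have hcard : ((V2 D d).card : ℝ) ≠ 0 := by
        rw [V2_card]; positivity
      field_simp
    · have hsum : ∑ v ∈ V1 D d, ((indDeg (bipCliqueGraph D d) (V1 D d) v : ℝ)) ^ p
          = (D : ℝ) * (d : ℝ) ^ p + (d : ℝ) * (D : ℝ) ^ p := by
        rw [Finset.sum_congr (V1_eq D d) (fun v _ => rfl),
          Finset.sum_image (fun a _ b _ h => Sum.inl_injective h)]
        rw [Fintype.sum_sum_type]
        simp only [indDeg_V1_left, indDeg_V1_right, Finset.sum_const, nsmul_eq_mul,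
          Finset.card_univ, Fintype.card_fin]
      rw [fp, hsum, V1_card, one_div, inv_mul_eq_div]
      push_cast
      rw [div_eq_div_iff (by positivity) (by positivity)]
      ring
  refine ⟨main, ?_⟩
  -- the limit
  have hbound : Tendsto (fun x : ℝ => ((d : ℝ) + 1) ^ p * (((d : ℝ) + x) / (d * x ^ p)))
      atTop (nhds 0) := by
    have h1 : Tendsto (fun x : ℝ => x ^ (-p)) atTop (nhds 0) :=
      tendsto_rpow_neg_atTop (by linarith)
    have h2 : Tendsto (fun x : ℝ => x ^ (-(p - 1))) atTop (nhds 0) :=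
      tendsto_rpow_neg_atTop (by linarith)
    have h3 : Tendsto (fun x : ℝ => ((d : ℝ) + 1) ^ p *
        (x ^ (-p) + (1 / d) * x ^ (-(p - 1)))) atTop (nhds 0) := by
      have := ((h1.add (h2.const_mul (1 / (d : ℝ)))).const_mul (((d : ℝ) + 1) ^ p))
      simpa using this
    refine h3.congr' ?_
    filter_upwards [eventually_gt_atTop (0 : ℝ)] with x hx
    have hxp : (0 : ℝ) < x ^ p := Real.rpow_pos_of_pos hx p
    have e1 : x ^ (-p) = (x ^ p)⁻¹ := Real.rpow_neg hx.le p
    have e2 : x ^ (-(p - 1)) = (x ^ (p - 1))⁻¹ := Real.rpow_neg hx.le _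
    have e3 : x ^ (p - 1) = x ^ p / x := by
      rw [Real.rpow_sub hx, Real.rpow_one]
    rw [e1, e2, e3]
    have hxne : x ≠ 0 := ne_of_gt hx
    have hxpne : x ^ p ≠ 0 := ne_of_gt hxp
    field_simp
  have hbound' : Tendsto (fun D : ℕ => ((d : ℝ) + 1) ^ p *
      (((d : ℝ) + D) / (d * (D : ℝ) ^ p))) atTop (nhds 0) :=
    hbound.comp tendsto_natCast_atTop_atTop
  apply squeeze_zero' ?_ ?_ hbound'
  · filter_upwards [eventually_gt_atTop 0] with D hD
    rw [(main D hD).1, (main D hD).2]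
    positivity
  · filter_upwards [eventually_gt_atTop 0] with D hD
    have hDpos : (0 : ℝ) < D := by exact_mod_cast hD
    rw [(main D hD).1, (main D hD).2]
    have hden : (0 : ℝ) < (d : ℝ) * (D : ℝ) ^ p := by positivity
    have hden2 : (0 : ℝ) < (D : ℝ) * (d : ℝ) ^ p + (d : ℝ) * (D : ℝ) ^ p := by positivity
    rw [div_div_eq_mul_div, mul_div_assoc]
    gcongr
    linarith [mul_pos hDpos (Real.rpow_pos_of_pos hdpos p)]
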